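/- For every graph G, the treespan of G is at least max(tw(G), Δ(G)/2), where tw is treewidth and Δ is maximum degree. -/

import Mathlib

open SimpleGraph

/-- `x` is a (reflexive) ancestor of `y` in the tree `T` rooted at `r`,
expressed metrically: `x` lies on the unique `r`–`y` path. -/
def AncIn {V : Type*} (T : SimpleGraph V) (r x y : V) : Prop :=
  T.dist r x + T.dist x y = T.dist r y

/-- A tree-layout of `G`: a rooted tree on the vertex set of `G` such that the endpoints
of every edge of `G` are in ancestor-descendant relation. -/
structure TreeLayout {V : Type*} (G : SimpleGraph V) where
  tree : SimpleGraph V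
  isTree : tree.IsTree
  root : V
  layout : ∀ ⦃x y : V⦄, G.Adj x y → AncIn tree root x y ∨ AncIn tree root y x

namespace TreeLayout

variable {V : Type*} {G : SimpleGraph V}

/-- `x` is an ancestor of `y` (reflexively) in the tree-layout. -/
def Anc (L : TreeLayout G) (x y : V) : Prop := AncIn L.tree L.root x y

def StrictAnc (L : TreeLayout G) (x y : V) : Prop := L.Anc x y ∧ x ≠ y

/-- The bandwidth of the tree-layout is at most `k`: neighbours in `G` are at
tree-distance at most `k`. -/
def BandwidthLE (L : TreeLayout G) (k : ℕ) : Prop :=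
  ∀ ⦃x y : V⦄, G.Adj x y → L.tree.dist x y ≤ k

/-- The interval `[a,b]` of the tree-layout: vertices on the tree path from `a` to `b`
(for `a` an ancestor of `b`). -/
def interval (L : TreeLayout G) (a b : V) : Set V := {z : V | L.Anc a z ∧ L.Anc z b}

end TreeLayout

/-- Treebandwidth: the minimum bandwidth over tree-layouts of `G`. -/
noncomputable def treebandwidth {V : Type*} (G : SimpleGraph V) : ℕ :=
  sInf {k | ∃ L : TreeLayout G, L.BandwidthLE k}

/-- Treedepth: the minimum depth (number of vertices on a root-to-leaf path) of a
tree-layout (elimination tree) of `G`. -/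
noncomputable def treedepth {V : Type*} (G : SimpleGraph V) : ℕ :=
  sInf {k | ∃ L : TreeLayout G, ∀ v : V, L.tree.dist L.root v + 1 ≤ k}

/-- A tree-partition of `G`: a partition of `V(G)` indexed by the nodes of a tree such that
every edge of `G` has both ends in one part or in parts indexed by adjacent nodes. -/
structure TreePartition {V : Type*} (G : SimpleGraph V) where
  ι : Type
  tree : SimpleGraph ι
  isTree : tree.IsTree
  part : V → ι
  adj : ∀ ⦃x y : V⦄, G.Adj x y → part x = part y ∨ tree.Adj (part x) (part y)

/-- Tree-partition-width: minimum over tree-partitions of the maximum part size. -/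
noncomputable def treePartitionWidth {V : Type*} (G : SimpleGraph V) : ℕ :=
  sInf {k | ∃ P : TreePartition G, ∀ i : P.ι, {v : V | P.part v = i}.ncard ≤ k}

/-- The connected component of `v` in the subgraph of `G` induced by `S`. -/
def connCompIn {V : Type*} (G : SimpleGraph V) (S : Set V) (v : V) : Set V :=
  {w : V | ∃ (hv : v ∈ S) (hw : w ∈ S), (G.induce S).Reachable ⟨v, hv⟩ ⟨w, hw⟩}

/-- `RootedTreedepthLE G U S n` expresses `td(G[S], U) ≤ n` for the rooted treedepth:
it is `0` when `S` misses `U`, and otherwise one may delete one vertex from each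
connected component and recurse. -/
inductive RootedTreedepthLE {V : Type*} (G : SimpleGraph V) (U : Set V) : Set V → ℕ → Prop
  | base (S : Set V) (n : ℕ) (h : S ∩ U = ∅) : RootedTreedepthLE G U S n
  | step (S : Set V) (n : ℕ) (pick : ∀ v : V, v ∈ S → V)
      (hpick : ∀ (v : V) (hv : v ∈ S), pick v hv ∈ connCompIn G S v)
      (h : ∀ (v : V) (hv : v ∈ S),
        RootedTreedepthLE G U (connCompIn G S v \ {pick v hv}) n) :
      RootedTreedepthLE G U S (n + 1)

/-- A `U`-rooted minor model of the path on `k` vertices in `G`. -/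
structure RootedPathMinor {V : Type*} (G : SimpleGraph V) (U : Set V) (k : ℕ) where
  branch : Fin k → Set V
  connected : ∀ i, (G.induce (branch i)).Connected
  disjoint : ∀ i j, i ≠ j → Disjoint (branch i) (branch j)
  rooted : ∀ i, (branch i ∩ U).Nonempty
  adj : ∀ i j : Fin k, (j : ℕ) = (i : ℕ) + 1 → ∃ a ∈ branch i, ∃ b ∈ branch j, G.Adj a b

/-- A subdivision of the `k`-fan in `G` with universal (center) vertex `v`:
branch vertices `b 0, …, b (k-1)` of the path, internally disjoint spokes from `v`
and internally disjoint path segments between consecutive branch vertices. -/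
structure FanSubdivision {V : Type*} (G : SimpleGraph V) (v : V) (k : ℕ) where
  b : Fin k → V
  binj : Function.Injective b
  bne : ∀ i, b i ≠ v
  spoke : ∀ i : Fin k, G.Walk v (b i)
  spokePath : ∀ i, (spoke i).IsPath
  seg : ∀ (i : Fin k) (h : (i : ℕ) + 1 < k), G.Walk (b i) (b ⟨(i : ℕ) + 1, h⟩)
  segPath : ∀ i h, (seg i h).IsPath
  vNotinSeg : ∀ i h, v ∉ (seg i h).support
  spokeDisj : ∀ i j, i ≠ j →
    {x | x ∈ (spoke i).support} ∩ {x | x ∈ (spoke j).support} = {v}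
  spokeSegDisj : ∀ i j h,
    {x | x ∈ (spoke i).support} ∩ {x | x ∈ (seg j h).support} ⊆
      ({b i} : Set V) ∩ {b j, b ⟨(j : ℕ) + 1, h⟩}
  segDisj : ∀ i j hi hj, i ≠ j →
    {x | x ∈ (seg i hi).support} ∩ {x | x ∈ (seg j hj).support} ⊆
      ({b i, b ⟨(i : ℕ) + 1, hi⟩} : Set V) ∩ {b j, b ⟨(j : ℕ) + 1, hj⟩}

/-- A `p`-centered colouring: every (nonempty) connected induced subgraph either receives
more than `p` colours or has a uniquely coloured vertex. -/
def IsPCenteredColoring {V : Type*} (G : SimpleGraph V) (p : ℕ) (c : V → ℕ) : Prop :=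
  ∀ S : Set V, S.Nonempty → (G.induce S).Connected →
    p < (c '' S).ncard ∨ ∃ x ∈ S, ∀ y ∈ S, c y = c x → y = x

/-- Treewidth, characterised via tree-layouts: the minimum over tree-layouts of the maximum
over nodes `u` of the number of strict ancestors of `u` that are `G`-neighbours of some
descendant of `u` (including `u`). -/
noncomputable def treewidthTL {V : Type*} (G : SimpleGraph V) : ℕ :=
  sInf {k | ∃ L : TreeLayout G, ∀ u : V,
    {a : V | L.StrictAnc a u ∧ ∃ d : V, L.Anc u d ∧ G.Adj a d}.ncard ≤ k}

/-- The pruned subtree of `x` in a tree-layout: descendants of `x` (including `x`) having a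
neighbour of `x` among their own descendants. -/
def prunedSubtree {V : Type*} {G : SimpleGraph V} (L : TreeLayout G) (x : V) : Set V :=
  {y : V | L.Anc x y ∧ ∃ d : V, L.Anc y d ∧ G.Adj x d}

/-- Treespan: the minimum over tree-layouts of (maximum size of a pruned subtree minus one). -/
noncomputable def treespan {V : Type*} (G : SimpleGraph V) : ℕ :=
  sInf {k | ∃ L : TreeLayout G, ∀ x : V, (prunedSubtree L x).ncard ≤ k + 1}

/-- A tree decomposition of `G`. -/
structure TreeDecomp {V : Type*} (G : SimpleGraph V) where
  ι : Type
  tree : SimpleGraph ι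
  isTree : tree.IsTree
  bag : ι → Set V
  coverV : ∀ v : V, ∃ t, v ∈ bag t
  coverE : ∀ ⦃x y : V⦄, G.Adj x y → ∃ t, x ∈ bag t ∧ y ∈ bag t
  subtree : ∀ v : V, (tree.induce {t : ι | v ∈ bag t}).Connected

/-- Domino treewidth: minimum width over tree decompositions in which every vertex
belongs to at most two bags. -/
noncomputable def dominoTreewidth {V : Type*} (G : SimpleGraph V) : ℕ :=
  sInf {k | ∃ D : TreeDecomp G, (∀ v : V, {t : D.ι | v ∈ D.bag t}.ncard ≤ 2) ∧
    ∀ t : D.ι, (D.bag t).ncard ≤ k + 1}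

/-- Edge-treewidth via tree-layouts: the minimum over tree-layouts of the maximum over nodes
`u` of the number of edges with one endpoint a descendant of `u` (including `u`) and the other
a strict ancestor of `u`. -/
noncomputable def edgeTreewidth {V : Type*} (G : SimpleGraph V) : ℕ :=
  sInf {k | ∃ L : TreeLayout G, ∀ u : V,
    {p : V × V | L.StrictAnc p.1 u ∧ L.Anc u p.2 ∧ G.Adj p.1 p.2}.ncard ≤ k}

/-- `S` is a block (2-connected component) of `G`: a maximal connected set of vertices whose
induced subgraph has no cutvertex. -/
def IsBlock {V : Type*} (G : SimpleGraph V) (S : Set V) : Prop :=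
  S.Nonempty ∧ (G.induce S).Connected ∧
    (∀ x ∈ S, (G.induce (S \ {x})).Preconnected) ∧
    ∀ S' : Set V, S ⊆ S' → (G.induce S').Connected →
      (∀ x ∈ S', (G.induce (S' \ {x})).Preconnected) → S' = S

/-- Biconnected maximum degree: the maximum over blocks of `G` of the maximum degree
inside the block. -/
noncomputable def biconnMaxDegree {V : Type*} (G : SimpleGraph V) : ℕ :=
  sSup {d | ∃ (S : Set V) (v : V), IsBlock G S ∧ v ∈ S ∧ d = {w ∈ S | G.Adj v w}.ncard}

/-- `G` is 3-connected: more than 3 vertices, and removing any two vertices leaves it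
connected. -/
def ThreeConnected {V : Type*} (G : SimpleGraph V) : Prop :=
  3 < Nat.card V ∧ ∀ x y : V, (G.induce {v : V | v ≠ x ∧ v ≠ y}).Connected

/-- `G` has `H` as a minor (branch-set model). -/
def HasMinor {V W : Type*} (G : SimpleGraph V) (H : SimpleGraph W) : Prop :=
  ∃ B : W → Set V, (∀ w, (G.induce (B w)).Connected) ∧
    (∀ w w', w ≠ w' → Disjoint (B w) (B w')) ∧
    ∀ ⦃w w'⦄, H.Adj w w' → ∃ a ∈ B w, ∃ b ∈ B w', G.Adj a b

/-- Planarity via Wagner's theorem: no `K₅` minor and no `K₃,₃` minor. -/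
def PlanarWagner {V : Type*} (G : SimpleGraph V) : Prop :=
  ¬ HasMinor G (completeGraph (Fin 5)) ∧
    ¬ HasMinor G (completeBipartiteGraph (Fin 3) (Fin 3))

/-- A subdivision of the `k`-wheel in `G` with hub `v`. -/
structure WheelSubdivision {V : Type*} (G : SimpleGraph V) (v : V) (k : ℕ) where
  b : Fin k → V
  binj : Function.Injective b
  bne : ∀ i, b i ≠ v
  spoke : ∀ i : Fin k, G.Walk v (b i)
  spokePath : ∀ i, (spoke i).IsPath
  seg : ∀ i : Fin k, G.Walk (b i) (b (finRotate k i))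
  segPath : ∀ i, (seg i).IsPath
  vNotinSeg : ∀ i, v ∉ (seg i).support
  spokeDisj : ∀ i j, i ≠ j →
    {x | x ∈ (spoke i).support} ∩ {x | x ∈ (spoke j).support} = {v}
  spokeSegDisj : ∀ i j,
    {x | x ∈ (spoke i).support} ∩ {x | x ∈ (seg j).support} ⊆
      ({b i} : Set V) ∩ {b j, b (finRotate k j)}
  segDisj : ∀ i j, i ≠ j →
    {x | x ∈ (seg i).support} ∩ {x | x ∈ (seg j).support} ⊆
      ({b i, b (finRotate k i)} : Set V) ∩ {b j, b (finRotate k j)}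

/-- A subdivision of the `k`-dipole with poles `u`, `v`: `k` internally vertex-disjoint
`u`–`v` paths of length at least `2`. -/
structure DipoleSubdivision {V : Type*} (G : SimpleGraph V) (u v : V) (k : ℕ) where
  path : Fin k → G.Walk u v
  isPath : ∀ i, (path i).IsPath
  len : ∀ i, 2 ≤ (path i).length
  disj : ∀ i j, i ≠ j →
    {x | x ∈ (path i).support} ∩ {x | x ∈ (path j).support} = ({u, v} : Set V)

/-- A separation of `G`. -/
def IsSeparation {V : Type*} (G : SimpleGraph V) (A B : Set V) : Prop :=
  A ∪ B = Set.univ ∧ ∀ a ∈ A \ B, ∀ b ∈ B \ A, ¬ G.Adj a b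

/-- `μ(X,Y)`: the minimum order of a separation `(A,B)` with `X ⊆ A` and `Y ⊆ B`. -/
noncomputable def muSep {V : Type*} (G : SimpleGraph V) (X Y : Set V) : ℕ :=
  sInf {n | ∃ A B : Set V, IsSeparation G A B ∧ X ⊆ A ∧ Y ⊆ B ∧ (A ∩ B).ncard = n}

def IsMaximalClique {V : Type*} (G : SimpleGraph V) (K : Set V) : Prop :=
  G.IsClique K ∧ ∀ K' : Set V, G.IsClique K' → K ⊆ K' → K' = K

/-- `G` is proper chordal: it has a tree-layout in which every maximal clique is an
interval of a root-to-leaf path. -/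
def ProperChordal {V : Type*} (G : SimpleGraph V) : Prop :=
  ∃ L : TreeLayout G, ∀ K : Set V, IsMaximalClique G K →
    ∃ a b : V, L.Anc a b ∧ K = L.interval a b

/-- A topological-minor model (subdivision embedding) of `H` in `G`. -/
structure TopMinorEmbedding {W V : Type*} (H : SimpleGraph W) (G : SimpleGraph V) where
  φ : W → V
  inj : Function.Injective φ
  path : ∀ ⦃a b : W⦄, H.Adj a b → G.Walk (φ a) (φ b)
  isPath : ∀ ⦃a b : W⦄ (h : H.Adj a b), (path h).IsPath
  branchOnPath : ∀ ⦃a b : W⦄ (h : H.Adj a b) (w : W),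
    φ w ∈ (path h).support → w = a ∨ w = b
  disj : ∀ ⦃a b c d : W⦄ (hab : H.Adj a b) (hcd : H.Adj c d), s(a, b) ≠ s(c, d) →
    {x | x ∈ (path hab).support} ∩ {x | x ∈ (path hcd).support} ⊆
      ({φ a, φ b} : Set V) ∩ {φ c, φ d}

/-- A subdivision of the star `K_{1,s}` in `H` with all leaves in `X`. -/
structure StarSubdivision {V : Type*} (H : SimpleGraph V) (X : Set V) (s : ℕ) where
  center : V
  leaf : Fin s → V
  leafInj : Function.Injective leaf
  leafX : ∀ i, leaf i ∈ X
  leafNe : ∀ i, leaf i ≠ center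
  path : ∀ i : Fin s, H.Walk center (leaf i)
  isPath : ∀ i, (path i).IsPath
  disj : ∀ i j, i ≠ j →
    {x | x ∈ (path i).support} ∩ {x | x ∈ (path j).support} = {center}

/-- The weight `w(t,U)` of a set `U` at a node `t` of a tree decomposition is at most `a`:
`|β(t) ∩ U|` plus the number of a suitable family of adhesions incident to `t` whose union
hits all paths from `β(t)` to `U ∖ β(t)` is at most `a`. -/
def WeightLE {V : Type*} {G : SimpleGraph V} (D : TreeDecomp G) (U : Set V) (t : D.ι)
    (a : ℕ) : Prop :=
  ∃ F : Set D.ι, (∀ s ∈ F, D.tree.Adj t s) ∧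
    (D.bag t ∩ U).ncard + F.ncard ≤ a ∧
    ∀ ⦃x y : V⦄ (p : G.Walk x y), x ∈ D.bag t → y ∈ U \ D.bag t →
      ∃ z ∈ p.support, ∃ s ∈ F, z ∈ D.bag t ∩ D.bag s

/-- The graph obtained from `G` by subdividing the edge `xy` into a path with `n + 1`
new internal vertices. -/
def subdivideEdge {V : Type*} (G : SimpleGraph V) (x y : V) (n : ℕ) :
    SimpleGraph (V ⊕ Fin (n + 1)) :=
  SimpleGraph.fromRel (fun a b =>
    (∃ u w : V, a = Sum.inl u ∧ b = Sum.inl w ∧ G.Adj u w ∧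
      ¬(u = x ∧ w = y) ∧ ¬(u = y ∧ w = x)) ∨
    (a = Sum.inl x ∧ b = Sum.inr 0) ∨
    (∃ i : Fin n, a = Sum.inr i.castSucc ∧ b = Sum.inr i.succ) ∨
    (a = Sum.inr (Fin.last n) ∧ b = Sum.inl y))


section TsAux

open SimpleGraph

set_option linter.unusedSectionVars false

variable {V : Type*} [DecidableEq V]

private lemma ts_anc_refl (T : SimpleGraph V) (r a : V) : AncIn T r a a := by
  simp [AncIn, SimpleGraph.dist_self]

private lemma ts_anc_trans {T : SimpleGraph V} (hc : T.Connected) {r a u d : V}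
    (h1 : AncIn T r a u) (h2 : AncIn T r u d) : AncIn T r a d := by
  have t1 : T.dist a d ≤ T.dist a u + T.dist u d := hc.dist_triangle
  have t2 : T.dist r d ≤ T.dist r a + T.dist a d := hc.dist_triangle
  unfold AncIn at *
  omega

private lemma ts_dist_split {T : SimpleGraph V} (hc : T.Connected) {x y : V} (p : T.Walk x y)
    (hp : p.length = T.dist x y) {a : V} (ha : a ∈ p.support) :
    T.dist x a + T.dist a y = T.dist x y ∧ (p.takeUntil a ha).length = T.dist x a ∧
      (p.dropUntil a ha).length = T.dist a y := by
  have h1 : T.dist x a ≤ (p.takeUntil a ha).length := SimpleGraph.dist_le _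
  have h2 : T.dist a y ≤ (p.dropUntil a ha).length := SimpleGraph.dist_le _
  have h3 : (p.takeUntil a ha).length + (p.dropUntil a ha).length = p.length := by
    rw [← SimpleGraph.Walk.length_append, SimpleGraph.Walk.take_spec]
  have h4 : T.dist x y ≤ T.dist x a + T.dist a y := hc.dist_triangle
  omega

private lemma ts_anc_mem {T : SimpleGraph V} (hT : T.IsTree) {r u a : V}
    (p : T.Walk r u) (hp : p.length = T.dist r u) (h : AncIn T r a u) : a ∈ p.support := by
  obtain ⟨g1, hg1⟩ := hT.isConnected.exists_walk_length_eq_dist r a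
  obtain ⟨g2, hg2⟩ := hT.isConnected.exists_walk_length_eq_dist a u
  have hw : (g1.append g2).length = T.dist r u := by
    rw [SimpleGraph.Walk.length_append, hg1, hg2]; exact h
  have hwp : (g1.append g2).IsPath := SimpleGraph.Walk.isPath_of_length_eq_dist _ hw
  have hpp : p.IsPath := SimpleGraph.Walk.isPath_of_length_eq_dist _ hp
  have heq : g1.append g2 = p := (hT.existsUnique_path r u).unique hwp hpp
  rw [← heq, SimpleGraph.Walk.mem_support_append_iff]
  exact Or.inl (SimpleGraph.Walk.end_mem_support _)

private lemma ts_anc_total {T : SimpleGraph V} (hT : T.IsTree) {r u a b : V}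
    (ha : AncIn T r a u) (hb : AncIn T r b u) : AncIn T r a b ∨ AncIn T r b a := by
  have hc := hT.isConnected
  obtain ⟨p, hp⟩ := hc.exists_walk_length_eq_dist r u
  have haP : a ∈ p.support := ts_anc_mem hT p hp ha
  have hbP : b ∈ p.support := ts_anc_mem hT p hp hb
  obtain ⟨hsum, htake, hdrop⟩ := ts_dist_split hc p hp hbP
  have haP' : a ∈ (p.takeUntil b hbP).support ∨ a ∈ (p.dropUntil b hbP).support := by
    rw [← SimpleGraph.Walk.mem_support_append_iff, SimpleGraph.Walk.take_spec]; exact haP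
  rcases haP' with h | h
  · obtain ⟨hs, -, -⟩ := ts_dist_split hc _ htake h
    exact Or.inl hs
  · obtain ⟨hs, -, -⟩ := ts_dist_split hc _ hdrop h
    unfold AncIn at *
    omega

private lemma ts_exists_top {T : SimpleGraph V} (hT : T.IsTree) {r u : V} {A : Set V}
    (hA : A.Finite) (hne : A.Nonempty) (hanc : ∀ a ∈ A, AncIn T r a u) :
    ∃ a₀ ∈ A, ∀ a ∈ A, AncIn T r a₀ a := by
  obtain ⟨a₀, ha₀, hmin⟩ := Set.exists_min_image A (fun a => T.dist r a) hA hne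
  refine ⟨a₀, ha₀, fun a haA => ?_⟩
  rcases ts_anc_total hT (hanc a₀ ha₀) (hanc a haA) with h | h
  · exact h
  · have hle := hmin a haA
    have h0 : T.dist a a₀ = 0 := by unfold AncIn at h; omega
    have key : a = a₀ := (hT.isConnected.dist_eq_zero_iff).mp h0
    subst key
    exact h

private lemma ts_span_bound {G : SimpleGraph V} [Fintype V] (L : TreeLayout G) {k : ℕ}
    (hk : ∀ x : V, (prunedSubtree L x).ncard ≤ k + 1) (u : V) {A : Set V}
    (hA : ∀ a ∈ A, L.StrictAnc a u ∧ ∃ d : V, L.Anc u d ∧ G.Adj a d) : A.ncard ≤ k := by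
  rcases A.eq_empty_or_nonempty with rfl | hne
  · simp
  obtain ⟨a₀, ha₀, htop⟩ := ts_exists_top L.isTree A.toFinite hne
      (fun a ha => ((hA a ha).1).1)
  obtain ⟨hsa₀, d₀, hud₀, had₀⟩ := hA a₀ ha₀
  have hu : u ∉ A := fun h => ((hA u h).1).2 rfl
  have hsub : insert u A ⊆ prunedSubtree L a₀ := by
    rintro x (rfl | hx)
    · exact ⟨hsa₀.1, d₀, hud₀, had₀⟩
    · exact ⟨htop x hx, d₀, ts_anc_trans L.isTree.isConnected ((hA x hx).1).1 hud₀, had₀⟩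
  have h1 := Set.ncard_le_ncard hsub (Set.toFinite _)
  rw [Set.ncard_insert_of_notMem hu A.toFinite] at h1
  have h2 := hk a₀
  omega

end TsAux

section TsConstruction

open SimpleGraph

set_option linter.unusedSectionVars false

variable {V : Type*} [Fintype V] [Nonempty V]

private noncomputable def tsIota (v : V) : ℕ := ((Fintype.equivFin V) v : ℕ)

private lemma tsIota_inj : Function.Injective (tsIota (V := V)) := fun a b h =>
  (Fintype.equivFin V).injective (Fin.val_injective h)

private lemma tsIota_lt (v : V) : tsIota v < Fintype.card V := ((Fintype.equivFin V) v).isLt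

private noncomputable def tsTree : SimpleGraph V where
  Adj x y := tsIota x + 1 = tsIota y ∨ tsIota y + 1 = tsIota x
  symm := ⟨fun x y h => h.symm⟩
  loopless := ⟨fun x h => by rcases h with h | h <;> omega⟩

private lemma tsWalk : ∀ (k : ℕ) (x y : V), tsIota x + k = tsIota y →
    ∃ w : (tsTree (V := V)).Walk x y, w.length = k := by
  intro k
  induction k with
  | zero =>
    intro x y h
    have hxy : x = y := tsIota_inj (by omega)
    subst hxy
    exact ⟨SimpleGraph.Walk.nil, rfl⟩
  | succ k ih =>
    intro x y h
    have hy := tsIota_lt y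
    obtain ⟨x', hx'⟩ : ∃ x' : V, tsIota x' = tsIota x + 1 :=
      ⟨(Fintype.equivFin V).symm ⟨tsIota x + 1, by omega⟩, by simp [tsIota]⟩
    obtain ⟨w, hw⟩ := ih x' y (by omega)
    exact ⟨SimpleGraph.Walk.cons (show (tsTree (V := V)).Adj x x' from Or.inl hx'.symm) w, by simp [hw]⟩

private lemma tsLow {x y : V} (w : (tsTree (V := V)).Walk x y) :
    tsIota y ≤ tsIota x + w.length ∧ tsIota x ≤ tsIota y + w.length := by
  induction w with
  | nil => simp
  | cons h p ih =>
    rw [SimpleGraph.Walk.length_cons]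
    rcases h with h | h <;> omega

private lemma tsReach (x y : V) : (tsTree (V := V)).Reachable x y := by
  rcases le_total (tsIota x) (tsIota y) with h | h
  · obtain ⟨w, -⟩ := tsWalk (tsIota y - tsIota x) x y (by omega)
    exact ⟨w⟩
  · obtain ⟨w, -⟩ := tsWalk (tsIota x - tsIota y) y x (by omega)
    exact Reachable.symm ⟨w⟩

private lemma tsDist {x y : V} (h : tsIota x ≤ tsIota y) :
    (tsTree (V := V)).dist x y = tsIota y - tsIota x := by
  obtain ⟨w, hw⟩ := tsWalk (tsIota y - tsIota x) x y (by omega)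
  have h1 : (tsTree (V := V)).dist x y ≤ tsIota y - tsIota x := hw ▸ SimpleGraph.dist_le w
  obtain ⟨g, hg⟩ := (tsReach x y).exists_walk_length_eq_dist
  have h2 := (tsLow g).1
  omega

private lemma tsKey {x y : V} (hxy : tsIota x + 1 = tsIota y) :
    ∀ {a b : V} (w : (tsTree (V := V)).Walk a b), tsIota a ≤ tsIota x → tsIota x < tsIota b →
      s(x, y) ∈ w.edges := by
  intro a b w
  induction w with
  | nil => intro h1 h2; omega
  | @cons a c b h p ih =>
    intro h1 h2
    rw [SimpleGraph.Walk.edges_cons, List.mem_cons]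
    by_cases hc : tsIota c ≤ tsIota x
    · exact Or.inr (ih hc h2)
    · push_neg at hc
      rcases h with h | h
      · have hax : a = x := tsIota_inj (by omega)
        have hcy : c = y := tsIota_inj (by omega)
        subst hax
        subst hcy
        exact Or.inl rfl
      · omega

private lemma tsAcyclic : (tsTree (V := V)).IsAcyclic := by
  rw [SimpleGraph.isAcyclic_iff_forall_adj_isBridge]
  have key : ∀ x y : V, tsIota x + 1 = tsIota y → (tsTree (V := V)).IsBridge s(x, y) := by
    intro x y hxy
    rw [SimpleGraph.isBridge_iff_adj_and_forall_walk_mem_edges]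
    exact fun p => tsKey hxy p (le_refl _) (by omega)
  intro v w h
  rcases h with h | h
  · exact key v w h
  · rw [Sym2.eq_swap]
    exact key w v h

private lemma tsAnc {x y : V} (h : tsIota x ≤ tsIota y) :
    AncIn (tsTree (V := V)) ((Fintype.equivFin V).symm 0) x y := by
  have hr : tsIota ((Fintype.equivFin V).symm 0 : V) = 0 := by simp [tsIota]
  unfold AncIn
  rw [tsDist (x := (Fintype.equivFin V).symm 0) (by omega),
    tsDist (x := (Fintype.equivFin V).symm 0) (by omega), tsDist h]
  omega

private noncomputable def tsLayout (G : SimpleGraph V) : TreeLayout G where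
  tree := tsTree
  isTree := ⟨⟨tsReach⟩, tsAcyclic⟩
  root := (Fintype.equivFin V).symm 0
  layout := by
    intro x y _
    rcases le_total (tsIota x) (tsIota y) with h | h
    · exact Or.inl (tsAnc h)
    · exact Or.inr (tsAnc h)

end TsConstruction

/-- treespan is at least `max(tw(G), Δ(G)/2)`. -/
theorem treewidth_le_treespan_and_maxDegree_le_two_treespan {V : Type*} [Fintype V]
    (G : SimpleGraph V) [DecidableRel G.Adj] :
    treewidthTL G ≤ treespan G ∧ G.maxDegree ≤ 2 * treespan G := by
  classical
  by_cases hSne : {k | ∃ L : TreeLayout G, ∀ x : V, (prunedSubtree L x).ncard ≤ k + 1}.Nonempty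
  · obtain ⟨L, hL⟩ := Nat.sInf_mem hSne
    have hts : treespan G =
        sInf {k | ∃ L : TreeLayout G, ∀ x : V, (prunedSubtree L x).ncard ≤ k + 1} := rfl
    constructor
    · refine Nat.sInf_le ⟨L, fun u => ?_⟩
      exact ts_span_bound L hL u (fun a ha => ha)
    · apply SimpleGraph.maxDegree_le_of_forall_degree_le
      intro v
      have hdeg : G.degree v = (G.neighborSet v).ncard := by
        rw [← SimpleGraph.card_neighborSet_eq_degree, Set.ncard_eq_toFinset_card',
          Set.toFinset_card]
      set k := treespan G with hk
      set D := {w : V | G.Adj v w ∧ L.Anc v w} with hD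
      set A := {a : V | G.Adj a v ∧ L.Anc a v} with hA
      have hDA : G.neighborSet v ⊆ D ∪ A := by
        intro w hw
        rcases L.layout hw with h | h
        · exact Or.inl ⟨hw, h⟩
        · exact Or.inr ⟨hw.symm, h⟩
      have hAk : A.ncard ≤ k :=
        ts_span_bound L hL v
          (fun a ha => ⟨⟨ha.2, ha.1.ne⟩, v, ts_anc_refl _ _ _, ha.1⟩)
      have hDk : D.ncard ≤ k := by
        rcases D.eq_empty_or_nonempty with h | ⟨w₀, hw₀⟩
        · simp [h]
        · have hsub : insert v D ⊆ prunedSubtree L v := by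
            rintro x (rfl | hx)
            · exact ⟨ts_anc_refl _ _ _, w₀, hw₀.2, hw₀.1⟩
            · exact ⟨hx.2, x, ts_anc_refl _ _ _, hx.1⟩
          have hv : v ∉ D := fun h => h.1.ne rfl
          have h1 := Set.ncard_le_ncard hsub (Set.toFinite _)
          rw [Set.ncard_insert_of_notMem hv D.toFinite] at h1
          have h2 := hL v
          omega
      calc G.degree v = (G.neighborSet v).ncard := hdeg
        _ ≤ (D ∪ A).ncard := Set.ncard_le_ncard hDA (Set.toFinite _)
        _ ≤ D.ncard + A.ncard := Set.ncard_union_le _ _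
        _ ≤ 2 * k := by omega
  · have hnoL : ∀ L : TreeLayout G, False := by
      intro L
      apply hSne
      refine ⟨Fintype.card V, L, fun x => ?_⟩
      have h1 := Set.ncard_le_ncard (Set.subset_univ (prunedSubtree L x)) Set.finite_univ
      rw [Set.ncard_univ, Nat.card_eq_fintype_card] at h1
      omega
    constructor
    · have h1 : treewidthTL G = 0 := by
        unfold treewidthTL
        have he : {k | ∃ L : TreeLayout G, ∀ u : V,
            {a : V | L.StrictAnc a u ∧ ∃ d : V, L.Anc u d ∧ G.Adj a d}.ncard ≤ k} = ∅ := by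
          rw [Set.eq_empty_iff_forall_notMem]
          rintro k ⟨L, -⟩
          exact hnoL L
        rw [he, Nat.sInf_empty]
      rw [h1]
      exact Nat.zero_le _
    · have h2 : G.maxDegree = 0 := by
        apply Nat.le_zero.mp
        apply SimpleGraph.maxDegree_le_of_forall_degree_le
        intro v
        by_cases hV : Nonempty V
        · exact (hnoL (tsLayout G)).elim
        · exact absurd ⟨v⟩ hV
      rw [h2]
      exact Nat.zero_le _
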